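/- arXiv:1712.01331 — 2 statements merged into one kernel-verified Lean document; each statement's English description precedes it below -/
import Mathlib

section
/- Let τ be the Sol Laplacian τ(f) = e^{-2t} f_{xx} + e^{2t} f_{yy} + f_{tt}. The function f(x,y,t) = 8x⁵ − 40x³e^{-2t} + 15x e^{-4t} satisfies τ(f) = 0, and likewise f(x,y,t) = 16x⁶ − 120x⁴e^{-2t} + 90x²e^{-4t} − 5e^{-6t} satisfies τ(f) = 0. -/
noncomputable section

/-- Partial derivative in the first (x) coordinate. -/
def p1 (f : ℝ → ℝ → ℝ → ℂ) : ℝ → ℝ → ℝ → ℂ := fun x y t => deriv (fun s => f s y t) x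
/-- Partial derivative in the second (y) coordinate. -/
def p2 (f : ℝ → ℝ → ℝ → ℂ) : ℝ → ℝ → ℝ → ℂ := fun x y t => deriv (fun s => f x s t) y
/-- Partial derivative in the third (t) coordinate. -/
def p3 (f : ℝ → ℝ → ℝ → ℂ) : ℝ → ℝ → ℝ → ℂ := fun x y t => deriv (fun s => f x y s) t

/-- The Laplace-Beltrami operator of the Sol geometry:
`τ(f) = e^{-2t} f_xx + e^{2t} f_yy + f_tt`. -/
def solTau (f : ℝ → ℝ → ℝ → ℂ) : ℝ → ℝ → ℝ → ℂ := fun x y t =>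
  (Real.exp (-2*t) : ℂ) * p1 (p1 f) x y t
    + (Real.exp (2*t) : ℂ) * p2 (p2 f) x y t + p3 (p3 f) x y t

lemma aux_hx (n : ℕ) (x : ℝ) : HasDerivAt (fun s : ℝ => (s : ℂ) ^ n) (n * (x : ℂ) ^ (n - 1)) x :=
  (hasDerivAt_pow n (x : ℂ)).comp_ofReal

lemma aux_hx1 (x : ℝ) : HasDerivAt (fun s : ℝ => (s : ℂ)) 1 x := by
  simpa using (hasDerivAt_id x).ofReal_comp

lemma aux_ht (a t : ℝ) :
    HasDerivAt (fun s : ℝ => (Real.exp (a * s) : ℂ)) ((a : ℂ) * Real.exp (a * t)) t := by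
  have h := (((hasDerivAt_id t).const_mul a).exp).ofReal_comp
  simpa [mul_comm] using h

theorem sol_harmonic_deg5_deg6 :
    solTau (fun x y t => 8 * (x : ℂ) ^ 5 - 40 * (x : ℂ) ^ 3 * (Real.exp (-2*t) : ℂ)
        + 15 * (x : ℂ) * (Real.exp (-4*t) : ℂ)) = (fun _ _ _ => (0 : ℂ))
    ∧
    solTau (fun x y t => 16 * (x : ℂ) ^ 6 - 120 * (x : ℂ) ^ 4 * (Real.exp (-2*t) : ℂ)
        + 90 * (x : ℂ) ^ 2 * (Real.exp (-4*t) : ℂ) - 5 * (Real.exp (-6*t) : ℂ))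
      = (fun _ _ _ => (0 : ℂ)) := by
  have key2 : ∀ t : ℝ, ((Real.exp (-2*t) : ℂ)) * ((Real.exp (-2*t) : ℂ)) = (Real.exp (-4*t) : ℂ) := by
    intro t; rw [← Complex.ofReal_mul, ← Real.exp_add]; norm_num; ring_nf
  have key6 : ∀ t : ℝ, ((Real.exp (-2*t) : ℂ)) * ((Real.exp (-4*t) : ℂ)) = (Real.exp (-6*t) : ℂ) := by
    intro t; rw [← Complex.ofReal_mul, ← Real.exp_add]; norm_num; ring_nf
  constructor
  · funext x y t
    simp only [solTau, p1, p2, p3]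
    -- first x-derivative
    have d1 : (fun s : ℝ => deriv (fun u : ℝ => 8 * (u:ℂ)^5 - 40 * (u:ℂ)^3 * (Real.exp (-2*t) : ℂ)
        + 15 * (u:ℂ) * (Real.exp (-4*t) : ℂ)) s)
        = fun s : ℝ => 40 * (s:ℂ)^4 - 120 * (s:ℂ)^2 * (Real.exp (-2*t) : ℂ)
          + 15 * (Real.exp (-4*t) : ℂ) := by
      funext x'
      have h := ((((aux_hx 5 x').const_mul 8).sub (((aux_hx 3 x').const_mul 40).mul_const
        ((Real.exp (-2*t) : ℂ)))).add (((aux_hx1 x').const_mul 15).mul_const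
          ((Real.exp (-4*t) : ℂ))))
      exact h.deriv.trans (by push_cast; ring)
    -- second x-derivative
    have d2 : deriv (fun s : ℝ => 40 * (s:ℂ)^4 - 120 * (s:ℂ)^2 * (Real.exp (-2*t) : ℂ)
          + 15 * (Real.exp (-4*t) : ℂ)) x
        = 160 * (x:ℂ)^3 - 240 * (x:ℂ) * (Real.exp (-2*t) : ℂ) := by
      have h := ((((aux_hx 4 x).const_mul 40).sub (((aux_hx 2 x).const_mul 120).mul_const
        ((Real.exp (-2*t) : ℂ)))).add (hasDerivAt_const x (15 * (Real.exp (-4*t) : ℂ))))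
      exact h.deriv.trans (by push_cast; ring)
    -- y-derivatives vanish
    have dy : (fun s : ℝ => deriv (fun u : ℝ => 8 * (x:ℂ)^5 - 40 * (x:ℂ)^3 * (Real.exp (-2*t) : ℂ)
        + 15 * (x:ℂ) * (Real.exp (-4*t) : ℂ)) s) = fun _ : ℝ => (0:ℂ) := by
      funext s; exact deriv_const s _
    -- first t-derivative
    have e1 : (fun s : ℝ => deriv (fun u : ℝ => 8 * (x:ℂ)^5 - 40 * (x:ℂ)^3 * (Real.exp (-2*u) : ℂ)
        + 15 * (x:ℂ) * (Real.exp (-4*u) : ℂ)) s)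
        = fun s : ℝ => 80 * (x:ℂ)^3 * (Real.exp (-2*s) : ℂ)
          - 60 * (x:ℂ) * (Real.exp (-4*s) : ℂ) := by
      funext s
      have h := (((hasDerivAt_const s (8 * (x:ℂ)^5)).sub
        ((aux_ht (-2) s).const_mul (40 * (x:ℂ)^3))).add
        ((aux_ht (-4) s).const_mul (15 * (x:ℂ))))
      have h' : HasDerivAt (fun u : ℝ => 8 * (x:ℂ)^5 - 40 * (x:ℂ)^3 * (Real.exp (-2*u) : ℂ)
          + 15 * (x:ℂ) * (Real.exp (-4*u) : ℂ))
          (80 * (x:ℂ)^3 * (Real.exp (-2*s) : ℂ) - 60 * (x:ℂ) * (Real.exp (-4*s) : ℂ)) s :=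
        h.congr_deriv (by push_cast; ring)
      exact h'.deriv
    -- second t-derivative
    have e2 : deriv (fun s : ℝ => 80 * (x:ℂ)^3 * (Real.exp (-2*s) : ℂ)
          - 60 * (x:ℂ) * (Real.exp (-4*s) : ℂ)) t
        = -160 * (x:ℂ)^3 * (Real.exp (-2*t) : ℂ) + 240 * (x:ℂ) * (Real.exp (-4*t) : ℂ) := by
      have h := (((aux_ht (-2) t).const_mul (80 * (x:ℂ)^3)).sub
        ((aux_ht (-4) t).const_mul (60 * (x:ℂ))))
      have h' : HasDerivAt (fun s : ℝ => 80 * (x:ℂ)^3 * (Real.exp (-2*s) : ℂ)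
          - 60 * (x:ℂ) * (Real.exp (-4*s) : ℂ))
          (-160 * (x:ℂ)^3 * (Real.exp (-2*t) : ℂ) + 240 * (x:ℂ) * (Real.exp (-4*t) : ℂ)) t :=
        h.congr_deriv (by push_cast; ring)
      exact h'.deriv
    rw [d1, d2, dy, deriv_const, e1, e2]
    rw [mul_zero]
    linear_combination (-240 * (x:ℂ)) * key2 t
  · funext x y t
    simp only [solTau, p1, p2, p3]
    have d1 : (fun s : ℝ => deriv (fun u : ℝ => 16 * (u:ℂ)^6 - 120 * (u:ℂ)^4 * (Real.exp (-2*t) : ℂ)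
        + 90 * (u:ℂ)^2 * (Real.exp (-4*t) : ℂ) - 5 * (Real.exp (-6*t) : ℂ)) s)
        = fun s : ℝ => 96 * (s:ℂ)^5 - 480 * (s:ℂ)^3 * (Real.exp (-2*t) : ℂ)
          + 180 * (s:ℂ) * (Real.exp (-4*t) : ℂ) := by
      funext x'
      have h := (((((aux_hx 6 x').const_mul 16).sub (((aux_hx 4 x').const_mul 120).mul_const
        ((Real.exp (-2*t) : ℂ)))).add (((aux_hx 2 x').const_mul 90).mul_const
          ((Real.exp (-4*t) : ℂ)))).sub (hasDerivAt_const x' (5 * (Real.exp (-6*t) : ℂ))))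
      exact h.deriv.trans (by push_cast; ring)
    have d2 : deriv (fun s : ℝ => 96 * (s:ℂ)^5 - 480 * (s:ℂ)^3 * (Real.exp (-2*t) : ℂ)
          + 180 * (s:ℂ) * (Real.exp (-4*t) : ℂ)) x
        = 480 * (x:ℂ)^4 - 1440 * (x:ℂ)^2 * (Real.exp (-2*t) : ℂ)
          + 180 * (Real.exp (-4*t) : ℂ) := by
      have h := ((((aux_hx 5 x).const_mul 96).sub (((aux_hx 3 x).const_mul 480).mul_const
        ((Real.exp (-2*t) : ℂ)))).add (((aux_hx1 x).const_mul 180).mul_const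
          ((Real.exp (-4*t) : ℂ))))
      exact h.deriv.trans (by push_cast; ring)
    have dy : (fun s : ℝ => deriv (fun u : ℝ => 16 * (x:ℂ)^6 - 120 * (x:ℂ)^4 * (Real.exp (-2*t) : ℂ)
        + 90 * (x:ℂ)^2 * (Real.exp (-4*t) : ℂ) - 5 * (Real.exp (-6*t) : ℂ)) s)
        = fun _ : ℝ => (0:ℂ) := by
      funext s; exact deriv_const s _
    have e1 : (fun s : ℝ => deriv (fun u : ℝ => 16 * (x:ℂ)^6 - 120 * (x:ℂ)^4 * (Real.exp (-2*u) : ℂ)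
        + 90 * (x:ℂ)^2 * (Real.exp (-4*u) : ℂ) - 5 * (Real.exp (-6*u) : ℂ)) s)
        = fun s : ℝ => 240 * (x:ℂ)^4 * (Real.exp (-2*s) : ℂ)
          - 360 * (x:ℂ)^2 * (Real.exp (-4*s) : ℂ) + 30 * (Real.exp (-6*s) : ℂ) := by
      funext s
      have h := ((((hasDerivAt_const s (16 * (x:ℂ)^6)).sub
        ((aux_ht (-2) s).const_mul (120 * (x:ℂ)^4))).add
        ((aux_ht (-4) s).const_mul (90 * (x:ℂ)^2))).sub
        ((aux_ht (-6) s).const_mul 5))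
      have h' : HasDerivAt (fun u : ℝ => 16 * (x:ℂ)^6 - 120 * (x:ℂ)^4 * (Real.exp (-2*u) : ℂ)
          + 90 * (x:ℂ)^2 * (Real.exp (-4*u) : ℂ) - 5 * (Real.exp (-6*u) : ℂ))
          (240 * (x:ℂ)^4 * (Real.exp (-2*s) : ℂ) - 360 * (x:ℂ)^2 * (Real.exp (-4*s) : ℂ)
            + 30 * (Real.exp (-6*s) : ℂ)) s :=
        h.congr_deriv (by push_cast; ring)
      exact h'.deriv
    have e2 : deriv (fun s : ℝ => 240 * (x:ℂ)^4 * (Real.exp (-2*s) : ℂ)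
          - 360 * (x:ℂ)^2 * (Real.exp (-4*s) : ℂ) + 30 * (Real.exp (-6*s) : ℂ)) t
        = -480 * (x:ℂ)^4 * (Real.exp (-2*t) : ℂ) + 1440 * (x:ℂ)^2 * (Real.exp (-4*t) : ℂ)
          - 180 * (Real.exp (-6*t) : ℂ) := by
      have h := ((((aux_ht (-2) t).const_mul (240 * (x:ℂ)^4)).sub
        ((aux_ht (-4) t).const_mul (360 * (x:ℂ)^2))).add
        ((aux_ht (-6) t).const_mul 30))
      have h' : HasDerivAt (fun s : ℝ => 240 * (x:ℂ)^4 * (Real.exp (-2*s) : ℂ)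
          - 360 * (x:ℂ)^2 * (Real.exp (-4*s) : ℂ) + 30 * (Real.exp (-6*s) : ℂ))
          (-480 * (x:ℂ)^4 * (Real.exp (-2*t) : ℂ) + 1440 * (x:ℂ)^2 * (Real.exp (-4*t) : ℂ)
            - 180 * (Real.exp (-6*t) : ℂ)) t :=
        h.congr_deriv (by push_cast; ring)
      exact h'.deriv
    rw [d1, d2, dy, deriv_const, e1, e2]
    rw [mul_zero]
    linear_combination (-1440 * (x:ℂ)^2) * key2 t + (180 : ℂ) * key6 t
end
end

section
/- Let τ be the Sol Laplacian τ(f) = e^{-2t} f_{xx} + e^{2t} f_{yy} + f_{tt}. For a₂,a₃,b₂,b₃ ∈ ℂ, set h₂(x,y,t) = a₂(2x² − e^{-2t}) + a₃(2x³ − 3x e^{-2t}) and h₃(x,y,t) = b₂(2y² − e^{2t}) + b₃(2y³ − 3y e^{2t}). Then τ(h₂·h₃)(x,y,t) = −8(a₂ + 3a₃x)(b₂ + 3b₃y) and τ²(h₂·h₃) = 0. In particular, if a₂ + 3a₃x and b₂ + 3b₃y are not identically zero (e.g. (a₂,a₃) ≠ 0 and (b₂,b₃) ≠ 0), then h₂·h₃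 is proper biharmonic on Sol. -/
noncomputable section

lemma hasDerivAt_cubic (c₀ c₁ c₂ c₃ : ℂ) (x : ℝ) :
    HasDerivAt (fun s : ℝ => c₀ + c₁ * (s : ℂ) + c₂ * (s : ℂ) ^ 2 + c₃ * (s : ℂ) ^ 3)
      (c₁ + 2 * c₂ * (x : ℂ) + 3 * c₃ * (x : ℂ) ^ 2) x := by
  have h : HasDerivAt (fun s : ℝ => (s : ℂ)) 1 x := by
    simpa using (hasDerivAt_id x).ofReal_comp
  have h2 : HasDerivAt (fun s : ℝ => (s : ℂ) ^ 2) (2 * (x : ℂ)) x := by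
    have := h.mul h
    have e : (fun s : ℝ => (s : ℂ) * (s : ℂ)) = fun s : ℝ => (s : ℂ) ^ 2 := by
      funext s; ring
    rw [show ((fun s : ℝ => (s : ℂ)) * fun s : ℝ => (s : ℂ)) = fun s : ℝ => (s : ℂ) ^ 2 from e] at this
    exact this.congr_deriv (by ring)
  have h3 : HasDerivAt (fun s : ℝ => (s : ℂ) ^ 3) (3 * (x : ℂ) ^ 2) x := by
    have := h2.mul h
    have e : (fun s : ℝ => (s : ℂ) ^ 2 * (s : ℂ)) = fun s : ℝ => (s : ℂ) ^ 3 := by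
      funext s; ring
    rw [show ((fun s : ℝ => (s : ℂ) ^ 2) * fun s : ℝ => (s : ℂ)) = fun s : ℝ => (s : ℂ) ^ 3 from e] at this
    exact this.congr_deriv (by ring)
  have H := (((hasDerivAt_const x c₀).add (h.const_mul c₁)).add
      (h2.const_mul c₂)).add (h3.const_mul c₃)
  exact H.congr_deriv (by ring)

lemma deriv_cubic (c₀ c₁ c₂ c₃ : ℂ) (x : ℝ) :
    deriv (fun s : ℝ => c₀ + c₁ * (s : ℂ) + c₂ * (s : ℂ) ^ 2 + c₃ * (s : ℂ) ^ 3) x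
      = c₁ + 2 * c₂ * (x : ℂ) + 3 * c₃ * (x : ℂ) ^ 2 :=
  (hasDerivAt_cubic c₀ c₁ c₂ c₃ x).deriv

lemma hasDerivAt_expmix (c₀ c₁ c₂ : ℂ) (t : ℝ) :
    HasDerivAt (fun s : ℝ => c₀ + c₁ * (Real.exp (-2*s) : ℂ) + c₂ * (Real.exp (2*s) : ℂ))
      (-2 * c₁ * (Real.exp (-2*t) : ℂ) + 2 * c₂ * (Real.exp (2*t) : ℂ)) t := by
  have h1 : HasDerivAt (fun s : ℝ => (Real.exp (-2*s) : ℂ)) (-2 * (Real.exp (-2*t) : ℂ)) t := by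
    have := (((hasDerivAt_id t).const_mul (-2 : ℝ)).exp).ofReal_comp
    simpa [mul_comm] using this
  have h2 : HasDerivAt (fun s : ℝ => (Real.exp (2*s) : ℂ)) (2 * (Real.exp (2*t) : ℂ)) t := by
    have := (((hasDerivAt_id t).const_mul (2 : ℝ)).exp).ofReal_comp
    simpa [mul_comm] using this
  have H := ((hasDerivAt_const t c₀).add (h1.const_mul c₁)).add (h2.const_mul c₂)
  exact H.congr_deriv (by ring)

lemma deriv_expmix (c₀ c₁ c₂ : ℂ) (t : ℝ) :
    deriv (fun s : ℝ => c₀ + c₁ * (Real.exp (-2*s) : ℂ) + c₂ * (Real.exp (2*s) : ℂ)) t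
      = -2 * c₁ * (Real.exp (-2*t) : ℂ) + 2 * c₂ * (Real.exp (2*t) : ℂ) :=
  (hasDerivAt_expmix c₀ c₁ c₂ t).deriv

lemma expEF (s : ℝ) : (Real.exp (-2*s) : ℂ) * (Real.exp (2*s) : ℂ) = 1 := by
  rw [← Complex.ofReal_mul, ← Real.exp_add]
  norm_num

lemma deriv2_x (u v w g : ℂ) (x : ℝ) :
    deriv (fun s : ℝ => deriv (fun s' : ℝ =>
        (u * (2 * (s' : ℂ) ^ 2 - w) + v * (2 * (s' : ℂ) ^ 3 - 3 * (s' : ℂ) * w)) * g) s) x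
      = (4 * u + 12 * v * (x : ℂ)) * g := by
  have d1 : ∀ X : ℝ, deriv (fun s' : ℝ =>
      (u * (2 * (s' : ℂ) ^ 2 - w) + v * (2 * (s' : ℂ) ^ 3 - 3 * (s' : ℂ) * w)) * g) X
      = (-3*v*w*g) + (4*u*g) * (X : ℂ) + (6*v*g) * (X : ℂ) ^ 2 := by
    intro X
    rw [show (fun s' : ℝ =>
        (u * (2 * (s' : ℂ) ^ 2 - w) + v * (2 * (s' : ℂ) ^ 3 - 3 * (s' : ℂ) * w)) * g)
        = (fun s' : ℝ => (-(u*w*g)) + (-3*v*w*g) * (s' : ℂ) + (2*u*g) * (s' : ℂ) ^ 2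
            + (2*v*g) * (s' : ℂ) ^ 3) from funext fun s' => by ring, deriv_cubic]
    ring
  simp only [d1]
  rw [show (fun s : ℝ => (-3*v*w*g) + (4*u*g) * (s : ℂ) + (6*v*g) * (s : ℂ) ^ 2)
      = (fun s : ℝ => (-3*v*w*g) + (4*u*g) * (s : ℂ) + (6*v*g) * (s : ℂ) ^ 2
          + 0 * (s : ℂ) ^ 3) from funext fun s => by ring, deriv_cubic]
  ring

lemma deriv2_y (u v w g : ℂ) (y : ℝ) :
    deriv (fun s : ℝ => deriv (fun s' : ℝ =>
        g * (u * (2 * (s' : ℂ) ^ 2 - w) + v * (2 * (s' : ℂ) ^ 3 - 3 * (s' : ℂ) * w))) s) y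
      = g * (4 * u + 12 * v * (y : ℂ)) := by
  have d1 : ∀ X : ℝ, deriv (fun s' : ℝ =>
      g * (u * (2 * (s' : ℂ) ^ 2 - w) + v * (2 * (s' : ℂ) ^ 3 - 3 * (s' : ℂ) * w))) X
      = (-3*v*w*g) + (4*u*g) * (X : ℂ) + (6*v*g) * (X : ℂ) ^ 2 := by
    intro X
    rw [show (fun s' : ℝ =>
        g * (u * (2 * (s' : ℂ) ^ 2 - w) + v * (2 * (s' : ℂ) ^ 3 - 3 * (s' : ℂ) * w)))
        = (fun s' : ℝ => (-(u*w*g)) + (-3*v*w*g) * (s' : ℂ) + (2*u*g) * (s' : ℂ) ^ 2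
            + (2*v*g) * (s' : ℂ) ^ 3) from funext fun s' => by ring, deriv_cubic]
    ring
  simp only [d1]
  rw [show (fun s : ℝ => (-3*v*w*g) + (4*u*g) * (s : ℂ) + (6*v*g) * (s : ℂ) ^ 2)
      = (fun s : ℝ => (-3*v*w*g) + (4*u*g) * (s : ℂ) + (6*v*g) * (s : ℂ) ^ 2
          + 0 * (s : ℂ) ^ 3) from funext fun s => by ring, deriv_cubic]
  ring

lemma deriv2_t (a₂ a₃ b₂ b₃ : ℂ) (x y t : ℝ) :
    deriv (fun s : ℝ => deriv (fun s' : ℝ =>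
        (a₂ * (2 * (x : ℂ) ^ 2 - (Real.exp (-2*s') : ℂ))
          + a₃ * (2 * (x : ℂ) ^ 3 - 3 * (x : ℂ) * (Real.exp (-2*s') : ℂ))) *
        (b₂ * (2 * (y : ℂ) ^ 2 - (Real.exp (2*s') : ℂ))
          + b₃ * (2 * (y : ℂ) ^ 3 - 3 * (y : ℂ) * (Real.exp (2*s') : ℂ)))) s) t
      = -4 * (a₂ + 3*a₃*(x:ℂ)) * (2*b₂*(y:ℂ)^2 + 2*b₃*(y:ℂ)^3) * (Real.exp (-2*t) : ℂ)
        - 4 * (2*a₂*(x:ℂ)^2 + 2*a₃*(x:ℂ)^3) * (b₂ + 3*b₃*(y:ℂ)) * (Real.exp (2*t) : ℂ) := by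
  have d1 : ∀ X : ℝ, deriv (fun s' : ℝ =>
      (a₂ * (2 * (x : ℂ) ^ 2 - (Real.exp (-2*s') : ℂ))
        + a₃ * (2 * (x : ℂ) ^ 3 - 3 * (x : ℂ) * (Real.exp (-2*s') : ℂ))) *
      (b₂ * (2 * (y : ℂ) ^ 2 - (Real.exp (2*s') : ℂ))
        + b₃ * (2 * (y : ℂ) ^ 3 - 3 * (y : ℂ) * (Real.exp (2*s') : ℂ)))) X
      = 2 * (a₂ + 3*a₃*(x:ℂ)) * (2*b₂*(y:ℂ)^2 + 2*b₃*(y:ℂ)^3) * (Real.exp (-2*X) : ℂ)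
        - 2 * (2*a₂*(x:ℂ)^2 + 2*a₃*(x:ℂ)^3) * (b₂ + 3*b₃*(y:ℂ)) * (Real.exp (2*X) : ℂ) := by
    intro X
    rw [show (fun s' : ℝ =>
        (a₂ * (2 * (x : ℂ) ^ 2 - (Real.exp (-2*s') : ℂ))
          + a₃ * (2 * (x : ℂ) ^ 3 - 3 * (x : ℂ) * (Real.exp (-2*s') : ℂ))) *
        (b₂ * (2 * (y : ℂ) ^ 2 - (Real.exp (2*s') : ℂ))
          + b₃ * (2 * (y : ℂ) ^ 3 - 3 * (y : ℂ) * (Real.exp (2*s') : ℂ))))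
        = (fun s' : ℝ =>
          ((2*a₂*(x:ℂ)^2 + 2*a₃*(x:ℂ)^3) * (2*b₂*(y:ℂ)^2 + 2*b₃*(y:ℂ)^3)
              + (a₂ + 3*a₃*(x:ℂ)) * (b₂ + 3*b₃*(y:ℂ)))
            + (-(a₂ + 3*a₃*(x:ℂ)) * (2*b₂*(y:ℂ)^2 + 2*b₃*(y:ℂ)^3)) * (Real.exp (-2*s') : ℂ)
            + (-(2*a₂*(x:ℂ)^2 + 2*a₃*(x:ℂ)^3) * (b₂ + 3*b₃*(y:ℂ))) * (Real.exp (2*s') : ℂ))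
        from funext fun s' => by
          linear_combination (a₂ + 3*a₃*(x:ℂ)) * (b₂ + 3*b₃*(y:ℂ)) * expEF s',
      deriv_expmix]
    ring
  simp only [d1]
  rw [show (fun s : ℝ =>
      2 * (a₂ + 3*a₃*(x:ℂ)) * (2*b₂*(y:ℂ)^2 + 2*b₃*(y:ℂ)^3) * (Real.exp (-2*s) : ℂ)
        - 2 * (2*a₂*(x:ℂ)^2 + 2*a₃*(x:ℂ)^3) * (b₂ + 3*b₃*(y:ℂ)) * (Real.exp (2*s) : ℂ))
      = (fun s : ℝ => (0:ℂ)
          + (2 * (a₂ + 3*a₃*(x:ℂ)) * (2*b₂*(y:ℂ)^2 + 2*b₃*(y:ℂ)^3)) * (Real.exp (-2*s) : ℂ)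
          + (-(2 * (2*a₂*(x:ℂ)^2 + 2*a₃*(x:ℂ)^3) * (b₂ + 3*b₃*(y:ℂ)))) * (Real.exp (2*s) : ℂ))
      from funext fun s => by ring, deriv_expmix]
  ring

theorem sol_product_biharmonic (a₂ a₃ b₂ b₃ : ℂ)
    (h₂ h₃ : ℝ → ℝ → ℝ → ℂ)
    (hh₂ : h₂ = fun (x y t : ℝ) => a₂ * (2 * (x : ℂ) ^ 2 - (Real.exp (-2*t) : ℂ))
        + a₃ * (2 * (x : ℂ) ^ 3 - 3 * (x : ℂ) * (Real.exp (-2*t) : ℂ)))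
    (hh₃ : h₃ = fun (x y t : ℝ) => b₂ * (2 * (y : ℂ) ^ 2 - (Real.exp (2*t) : ℂ))
        + b₃ * (2 * (y : ℂ) ^ 3 - 3 * (y : ℂ) * (Real.exp (2*t) : ℂ))) :
    solTau (fun (x y t : ℝ) => h₂ x y t * h₃ x y t)
        = (fun (x y t : ℝ) => -8 * (a₂ + 3 * a₃ * (x : ℂ)) * (b₂ + 3 * b₃ * (y : ℂ)))
      ∧ solTau (solTau (fun (x y t : ℝ) => h₂ x y t * h₃ x y t)) = (fun _ _ _ => (0 : ℂ))
      ∧ (((a₂, a₃) ≠ (0, 0) ∧ (b₂, b₃) ≠ (0, 0)) →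
          solTau (fun (x y t : ℝ) => h₂ x y t * h₃ x y t) ≠ fun _ _ _ => (0 : ℂ)) := by
  subst hh₂ hh₃
  have key : solTau (fun (x y t : ℝ) =>
      (a₂ * (2 * (x : ℂ) ^ 2 - (Real.exp (-2*t) : ℂ))
        + a₃ * (2 * (x : ℂ) ^ 3 - 3 * (x : ℂ) * (Real.exp (-2*t) : ℂ))) *
      (b₂ * (2 * (y : ℂ) ^ 2 - (Real.exp (2*t) : ℂ))
        + b₃ * (2 * (y : ℂ) ^ 3 - 3 * (y : ℂ) * (Real.exp (2*t) : ℂ))))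
      = (fun (x y t : ℝ) => -8 * (a₂ + 3 * a₃ * (x : ℂ)) * (b₂ + 3 * b₃ * (y : ℂ))) := by
    funext x y t
    simp only [solTau, p1, p2, p3]
    rw [deriv2_x, deriv2_y, deriv2_t]
    linear_combination (-8 * (a₂ + 3*a₃*(x:ℂ)) * (b₂ + 3*b₃*(y:ℂ))) * expEF t
  refine ⟨key, ?_, ?_⟩
  · rw [key]
    funext x y t
    simp only [solTau, p1, p2, p3]
    have dx : ∀ X : ℝ, deriv (fun s : ℝ =>
        -8 * (a₂ + 3 * a₃ * (s : ℂ)) * (b₂ + 3 * b₃ * (y : ℂ))) X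
        = -24 * a₃ * (b₂ + 3 * b₃ * (y : ℂ)) := by
      intro X
      rw [show (fun s : ℝ => -8 * (a₂ + 3 * a₃ * (s : ℂ)) * (b₂ + 3 * b₃ * (y : ℂ)))
          = (fun s : ℝ => (-8 * a₂ * (b₂ + 3 * b₃ * (y : ℂ)))
              + (-24 * a₃ * (b₂ + 3 * b₃ * (y : ℂ))) * (s : ℂ)
              + 0 * (s : ℂ) ^ 2 + 0 * (s : ℂ) ^ 3) from funext fun s => by ring, deriv_cubic]
      ring
    have dy : ∀ X : ℝ, deriv (fun s : ℝ =>
        -8 * (a₂ + 3 * a₃ * (x : ℂ)) * (b₂ + 3 * b₃ * (s : ℂ))) X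
        = -24 * b₃ * (a₂ + 3 * a₃ * (x : ℂ)) := by
      intro X
      rw [show (fun s : ℝ => -8 * (a₂ + 3 * a₃ * (x : ℂ)) * (b₂ + 3 * b₃ * (s : ℂ)))
          = (fun s : ℝ => (-8 * b₂ * (a₂ + 3 * a₃ * (x : ℂ)))
              + (-24 * b₃ * (a₂ + 3 * a₃ * (x : ℂ))) * (s : ℂ)
              + 0 * (s : ℂ) ^ 2 + 0 * (s : ℂ) ^ 3) from funext fun s => by ring, deriv_cubic]
      ring
    simp only [dx, dy, deriv_const']
    simp
  · rintro ⟨ha, hb⟩ heq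
    rw [key] at heq
    obtain ⟨x₀, hx₀⟩ : ∃ x : ℝ, a₂ + 3 * a₃ * (x : ℂ) ≠ 0 := by
      by_cases h : a₂ = 0
      · have ha₃ : a₃ ≠ 0 := by
          intro h3; exact ha (by simp [h, h3])
        exact ⟨1, by simp [h, ha₃]⟩
      · exact ⟨0, by simpa using h⟩
    obtain ⟨y₀, hy₀⟩ : ∃ y : ℝ, b₂ + 3 * b₃ * (y : ℂ) ≠ 0 := by
      by_cases h : b₂ = 0
      · have hb₃ : b₃ ≠ 0 := by
          intro h3; exact hb (by simp [h, h3])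
        exact ⟨1, by simp [h, hb₃]⟩
      · exact ⟨0, by simpa using h⟩
    have := congrFun (congrFun (congrFun heq x₀) y₀) 0
    exact (mul_ne_zero (mul_ne_zero (by norm_num : (-8:ℂ) ≠ 0) hx₀) hy₀) this
end
end
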